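/- The hyperplane δ: x₁₂+x₂₃+x₃₁ = x₁₃+x₃₂+x₂₁ divides P₁ into two congruent parts: the linear involution I_ψ induced by the coordinate permutation ψ = (x₁₂ x₁₃)(x₃₁ x₂₁)(x₃₂ x₂₃) maps P₁¹ = P₁ ∩ {x₁₂+x₂₃+x₃₁ ≥ x₁₃+x₃₂+x₂₁} onto P₁² = P₁ ∩ {x₁₂+x₂₃+x₃₁ ≤ x₁₃+x₃₂+x₂₁}; in particular Vol(P₁¹) = Vol(P₁²). -/

import Mathlib

open MeasureTheory

/-- The polytope `P ⊂ ℝ⁶` in coordinates `(x₁₂, x₂₃, x₃₁, x₁₃, x₃₂, x₂₁)`,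
indexed as `(x 0, x 1, x 2, x 3, x 4, x 5)`. -/
def polyP : Set (EuclideanSpace ℝ (Fin 6)) :=
  {x | x 0 + x 3 + 2 * (x 5 + x 2) ≤ 1 ∧
       x 5 + x 1 + 2 * (x 0 + x 4) ≤ 1 ∧
       x 2 + x 4 + 2 * (x 3 + x 1) ≤ 1 ∧
       ∀ i, 0 ≤ x i}

/-- The hyperplane `α₁ : x₁₂+x₁₃+2(x₂₁+x₃₁) = 1`. -/
def alpha1 : Set (EuclideanSpace ℝ (Fin 6)) :=
  {x | x 0 + x 3 + 2 * (x 5 + x 2) = 1}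

/-- `P₁ = conv({O} ∪ (P ∩ α₁))`. -/
noncomputable def P1 : Set (EuclideanSpace ℝ (Fin 6)) :=
  convexHull ℝ ({0} ∪ (polyP ∩ alpha1))

/-- The map `I_ψ` induced by the coordinate permutation
`ψ = (x₁₂ x₁₃)(x₃₁ x₂₁)(x₃₂ x₂₃)`, swapping `x₁₂ ↔ x₁₃`, `x₃₁ ↔ x₂₁`,
`x₃₂ ↔ x₂₃`. -/
def Ipsi (x : EuclideanSpace ℝ (Fin 6)) : EuclideanSpace ℝ (Fin 6) :=
  WithLp.toLp 2 ![x 3, x 4, x 5, x 0, x 1, x 2]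

/-- `P₁¹ = P₁ ∩ {x₁₂+x₂₃+x₃₁ ≥ x₁₃+x₃₂+x₂₁}`. -/
noncomputable def P11 : Set (EuclideanSpace ℝ (Fin 6)) :=
  P1 ∩ {x | x 3 + x 4 + x 5 ≤ x 0 + x 1 + x 2}

/-- `P₁² = P₁ ∩ {x₁₂+x₂₃+x₃₁ ≤ x₁₃+x₃₂+x₂₁}`. -/
noncomputable def P12 : Set (EuclideanSpace ℝ (Fin 6)) :=
  P1 ∩ {x | x 0 + x 1 + x 2 ≤ x 3 + x 4 + x 5}

/-- The permutation of coordinates `i ↦ i + 3 (mod 6)`. -/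
def sigma6 : Equiv.Perm (Fin 6) :=
  ⟨![3,4,5,0,1,2], ![3,4,5,0,1,2], by decide, by decide⟩

/-- `I_ψ` as a linear isometry equivalence of `ℝ⁶`. -/
noncomputable def eIso : EuclideanSpace ℝ (Fin 6) ≃ₗᵢ[ℝ] EuclideanSpace ℝ (Fin 6) :=
  LinearIsometryEquiv.piLpCongrLeft 2 ℝ ℝ sigma6

lemma eIso_apply (x : EuclideanSpace ℝ (Fin 6)) : eIso x = Ipsi x := by
  ext i
  fin_cases i <;> rfl

lemma eIso_eq_Ipsi : ⇑eIso = Ipsi := funext eIso_apply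

lemma Ipsi_Ipsi (x : EuclideanSpace ℝ (Fin 6)) : Ipsi (Ipsi x) = x := by
  ext i
  fin_cases i <;> rfl

lemma Ipsi_mem_inter {x : EuclideanSpace ℝ (Fin 6)} (hx : x ∈ polyP ∩ alpha1) :
    Ipsi x ∈ polyP ∩ alpha1 := by
  obtain ⟨⟨h1, h2, h3, h4⟩, h5⟩ := hx
  have c0 : Ipsi x 0 = x 3 := rfl
  have c1 : Ipsi x 1 = x 4 := rfl
  have c2 : Ipsi x 2 = x 5 := rfl
  have c3 : Ipsi x 3 = x 0 := rfl
  have c4 : Ipsi x 4 = x 1 := rfl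
  have c5 : Ipsi x 5 = x 2 := rfl
  refine ⟨⟨?_, ?_, ?_, ?_⟩, ?_⟩ <;>
    simp only [polyP, alpha1, Set.mem_setOf_eq, c0, c1, c2, c3, c4, c5] at *
  · linarith
  · linarith
  · linarith
  · intro i
    fin_cases i <;> simp only [c0, c1, c2, c3, c4, c5] <;> apply h4
  · linarith

lemma Ipsi_image_inter : Ipsi '' (polyP ∩ alpha1) = polyP ∩ alpha1 := by
  apply Set.Subset.antisymm
  · rintro y ⟨x, hx, rfl⟩
    exact Ipsi_mem_inter hx
  · intro x hx
    exact ⟨Ipsi x, Ipsi_mem_inter hx, Ipsi_Ipsi x⟩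

lemma Ipsi_zero : Ipsi 0 = 0 := by
  ext i; fin_cases i <;> rfl

lemma Ipsi_image_P1 : Ipsi '' P1 = P1 := by
  have hlin : IsLinearMap ℝ Ipsi := by
    rw [← eIso_eq_Ipsi]
    exact eIso.toLinearEquiv.toLinearMap.isLinear
  rw [P1, hlin.image_convexHull, Set.image_union, Set.image_singleton, Ipsi_zero,
    Ipsi_image_inter]

lemma Ipsi_injective : Function.Injective Ipsi := by
  intro x y h
  have := congrArg Ipsi h
  rwa [Ipsi_Ipsi, Ipsi_Ipsi] at this

lemma Ipsi_image_half :
    Ipsi '' {x : EuclideanSpace ℝ (Fin 6) | x 3 + x 4 + x 5 ≤ x 0 + x 1 + x 2}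
      = {x : EuclideanSpace ℝ (Fin 6) | x 0 + x 1 + x 2 ≤ x 3 + x 4 + x 5} := by
  ext y
  constructor
  · rintro ⟨x, hx, rfl⟩
    exact hx
  · intro hy
    exact ⟨Ipsi y, hy, Ipsi_Ipsi y⟩

lemma Ipsi_image_P11 : Ipsi '' P11 = P12 := by
  rw [P11, P12, Set.image_inter Ipsi_injective, Ipsi_image_P1, Ipsi_image_half]

lemma convex_P11 : Convex ℝ P11 := by
  refine (convex_convexHull ℝ _).inter ?_
  intro x hx y hy a b ha hb hab
  have hx' : x 3 + x 4 + x 5 ≤ x 0 + x 1 + x 2 := hx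
  have hy' : y 3 + y 4 + y 5 ≤ y 0 + y 1 + y 2 := hy
  have h : ∀ i, (a • x + b • y) i = a * x i + b * y i := fun i => rfl
  simp only [Set.mem_setOf_eq, h]
  nlinarith [mul_le_mul_of_nonneg_left hx' ha, mul_le_mul_of_nonneg_left hy' hb]

/-- The hyperplane `δ` divides `P₁` into two congruent parts:
`I_ψ` maps `P₁¹` onto `P₁²`, whence `Vol(P₁¹) = Vol(P₁²)`. -/
theorem Ipsi_swaps_halves :
    Ipsi '' P11 = P12 ∧ volume P11 = volume P12 := by
  refine ⟨Ipsi_image_P11, ?_⟩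
  have h1 : P12 = eIso.symm ⁻¹' P11 := by
    rw [← Ipsi_image_P11, ← eIso_eq_Ipsi, eIso.image_eq_preimage_symm]
  rw [h1, eIso.symm.measurePreserving.measure_preimage
    (convex_P11.nullMeasurableSet _)]
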